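/- Let V be a finite-dimensional real inner product space, R an algebraic curvature tensor on V, and ε ∈ ℝ such that R(y,x,x,y) ≥ ε for all orthonormal x,y ∈ V. Then for all orthonormal v,w ∈ V the following are equivalent: (1) R(w,v,v,w) = ε; (2) R(w,v,v,u) = ε·⟨w,u⟩ for all u ∈ V (i.e., w is an eigenvector of the Jacobi operator 𝒥_v with eigenvalue ε). -/

import Mathlib

open scoped RealInnerProductSpace

set_option maxHeartbeats 1000000 in
/-- For an algebraic curvature tensor `R` on a finite-dimensional real inner
product space with `R(y,x,x,y) ≥ ε` for all orthonormal `x, y`, and orthonormal `v, w`,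
`sec(v,w) = ε` iff `w` is an `ε`-eigenvector of the Jacobi operator `𝒥_v`. -/
theorem stmt_0
    {V : Type*} [NormedAddCommGroup V] [InnerProductSpace ℝ V] [FiniteDimensional ℝ V]
    (R : V →ₗ[ℝ] V →ₗ[ℝ] V →ₗ[ℝ] V →ₗ[ℝ] ℝ)
    (hskew : ∀ X Y Z W : V, R X Y Z W = - R Y X Z W)
    (hpair : ∀ X Y Z W : V, R X Y Z W = R Z W X Y)
    (ε : ℝ)
    (hsec : ∀ x y : V, ‖x‖ = 1 → ‖y‖ = 1 → ⟪x, y⟫ = 0 → ε ≤ R y x x y)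
    (v w : V) (hv : ‖v‖ = 1) (hw : ‖w‖ = 1) (hvw : ⟪v, w⟫ = 0) :
    R w v v w = ε ↔ ∀ u : V, R w v v u = ε * ⟪w, u⟫ := by
  -- skew symmetry in the last pair
  have hskew' : ∀ X Y Z W : V, R X Y Z W = - R X Y W Z := by
    intro X Y Z W
    rw [hpair X Y Z W, hskew, ← hpair]
  constructor
  · intro h u
    have hwv : ⟪w, v⟫ = 0 := by rw [real_inner_comm]; exact hvw
    -- key lemma: for unit z ⊥ v, w we have R w v v z = 0
    have key : ∀ z : V, ‖z‖ = 1 → ⟪v, z⟫ = 0 → ⟪w, z⟫ = 0 → R w v v z = 0 := by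
      intro z hz hvz hwz
      set c := R w v v z with hc
      set d := R z v v z with hd
      have hsymm : R z v v w = c := by
        rw [hc, hskew' z v v w, hpair, hskew' w v z v]
        ring
      have H : ∀ s : ℝ, -(1/2) ≤ s → s ≤ 1/2 →
          ε ≤ (1 - s^2) * ε + 2 * s * Real.sqrt (1 - s^2) * c + s^2 * d := by
        intro s hs1 hs2
        have hs2' : s^2 ≤ 1 := by nlinarith
        set t := Real.sqrt (1 - s^2) with ht
        have ht2 : t^2 = 1 - s^2 := Real.sq_sqrt (by nlinarith)
        set w' := t • w + s • z with hw'
        have hvw' : ⟪v, w'⟫ = 0 := by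
          simp [hw', inner_add_right, inner_smul_right, hvw, hvz]
        have hnw' : ‖w'‖ = 1 := by
          have h1 : ‖w'‖^2 = 1 := by
            rw [← real_inner_self_eq_norm_sq]
            simp only [hw', inner_add_left, inner_add_right, inner_smul_left,
              inner_smul_right, hwz, real_inner_comm w z, conj_trivial,
              real_inner_self_eq_norm_sq, hw, hz]
            nlinarith
          nlinarith [norm_nonneg w']
        have hle := hsec v w' hv hnw' hvw'
        have hexp : R w' v v w' =
            t*t*(R w v v w) + t*s*c + s*t*(R z v v w) + s*s*d := by
          simp [hw', map_add, map_smul, LinearMap.add_apply, LinearMap.smul_apply,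
            smul_eq_mul, hc, hd]
          ring
        rw [hexp, hsymm, h] at hle
        have heq : t*t*ε + t*s*c + s*t*c + s*s*d
            = (1 - s^2) * ε + 2 * s * t * c + s^2 * d := by
          linear_combination ε * ht2
        linarith [hle, heq.le, heq.ge]
      -- from H at ±δ: |c| ≤ δ * (d - ε) for 0 < δ ≤ 1/2
      have Hd : ∀ δ : ℝ, 0 < δ → δ ≤ 1/2 → |c| ≤ δ * (d - ε) := by
        intro δ hδ hδ2
        have h1 := H δ (by linarith) hδ2
        have h2 := H (-δ) (by linarith) (by linarith)
        have ht : (1:ℝ)/2 ≤ Real.sqrt (1 - δ^2) := by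
          rw [show (1:ℝ)/2 = Real.sqrt (1/4) by
            rw [show (1:ℝ)/4 = (1/2)^2 by norm_num, Real.sqrt_sq (by norm_num)]]
          exact Real.sqrt_le_sqrt (by nlinarith)
        have hneg : (-δ)^2 = δ^2 := by ring
        rw [hneg] at h2
        set t := Real.sqrt (1 - δ^2)
        have h1' : -(2 * t * c) ≤ δ * (d - ε) := by nlinarith
        have h2' : 2 * t * c ≤ δ * (d - ε) := by nlinarith
        have habs : |2 * t * c| ≤ δ * (d - ε) := abs_le.2 ⟨by linarith, h2'⟩
        calc |c| ≤ |2 * t * c| := by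
              rw [abs_mul, abs_mul]
              have : (1:ℝ) ≤ |2| * |t| := by
                rw [abs_of_nonneg (le_trans (by norm_num) ht)]
                norm_num; linarith
              nlinarith [abs_nonneg c]
          _ ≤ δ * (d - ε) := habs
      by_contra hc0
      have hcpos : 0 < |c| := abs_pos.2 hc0
      have hdε : 2 * |c| ≤ d - ε := by
        have := Hd (1/2) (by norm_num) (by norm_num)
        linarith
      have hdpos : 0 < d - ε := by linarith
      set δ := |c| / (2 * (d - ε)) with hδdef
      have hδpos : 0 < δ := by positivity
      have hδle : δ ≤ 1/2 := by
        rw [hδdef, div_le_iff₀ (by positivity)]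
        nlinarith
      have := Hd δ hδpos hδle
      rw [hδdef] at this
      have : |c| ≤ |c| / 2 := by
        calc |c| ≤ |c| / (2 * (d - ε)) * (d - ε) := this
          _ = |c| / 2 := by field_simp
      linarith
    -- decompose u
    set a := ⟪v, u⟫ with ha
    set b := ⟪w, u⟫ with hb
    set z := u - a • v - b • w with hz
    have hvz : ⟪v, z⟫ = 0 := by
      simp [hz, inner_sub_right, inner_smul_right, real_inner_self_eq_norm_sq, hv, hvw, ha]
    have hwz : ⟪w, z⟫ = 0 := by
      simp [hz, inner_sub_right, inner_smul_right, real_inner_self_eq_norm_sq, hw,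
        hwv, hb]
    have hrz : R w v v z = 0 := by
      rcases eq_or_ne z 0 with h0 | h0
      · simp [h0]
      · have hn : ‖z‖ ≠ 0 := norm_ne_zero_iff.2 h0
        have hz1 : ‖(‖z‖⁻¹ • z)‖ = 1 := by
          rw [norm_smul, norm_inv, norm_norm, inv_mul_cancel₀ hn]
        have hvz1 : ⟪v, ‖z‖⁻¹ • z⟫ = 0 := by
          simp [inner_smul_right, hvz]
        have hwz1 : ⟪w, ‖z‖⁻¹ • z⟫ = 0 := by
          simp [inner_smul_right, hwz]
        have := key _ hz1 hvz1 hwz1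
        have h2 : R w v v (‖z‖⁻¹ • z) = ‖z‖⁻¹ * R w v v z := by
          simp [map_smul, smul_eq_mul]
        rw [h2] at this
        rcases mul_eq_zero.1 this with h | h
        · exact absurd h (inv_ne_zero hn)
        · exact h
    have hrv : R w v v v = 0 := by
      have h1 := hpair w v v v
      have h2 := hskew v v w v
      linarith
    have hu : u = z + a • v + b • w := by rw [hz]; abel
    rw [hu]
    simp [map_add, map_smul, smul_eq_mul, hrz, hrv, h]
    ring
  · intro h
    have := h w
    rw [real_inner_self_eq_norm_sq, hw] at this
    simpa using this
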